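/- Let S ≥ 2 and let b be an S×S matrix with entries in {0,1} such that b_{1,u} = 1 for all columns u and every row sum β_i = Σ_s b_{i,s} equals 2 for all rows i ≥ 2. Define α_s = Σ_{i=2}^{S} b_{i,s} and q = Σ_{s=1}^{S} (1/S)·(1/2)^{α_s}. Then q ≥ (S + 2)/(4S). -/

import Mathlib

open Finset

lemma pow_half_ge_aux (n : ℕ) : ((3:ℝ) - n) / 4 ≤ (1/2:ℝ) ^ n := by
  match n with
  | 0 => norm_num
  | 1 => norm_num
  | 2 => norm_num
  | (m+3) =>
    have h1 : ((3:ℝ) - (m+3 : ℕ)) / 4 ≤ 0 := by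
      have : (0:ℝ) ≤ m := Nat.cast_nonneg m
      push_cast; linarith
    exact h1.trans (by positivity)

/-- Theorem 7 (Case 1): for a 0/1 matrix `b` whose first row is all ones and in which
every non-first row sum is exactly 2, the quantity
`q = ∑_s (1/S)·(1/2)^(α s)` (with `α s` the column sum excluding the first row)
satisfies `q ≥ (S+2)/(4S)`. -/
theorem qval_ge_case1 (S : ℕ) [NeZero S] (hS : 2 ≤ S)
    (b : Fin S → Fin S → ℕ)
    (hb01 : ∀ i u, b i u = 0 ∨ b i u = 1)
    (hrow1 : ∀ u, b 0 u = 1)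
    (hβ : ∀ i, i ≠ 0 → ∑ u, b i u = 2) :
    ((S : ℝ) + 2) / (4 * S) ≤
      ∑ s, (1 / (S : ℝ)) * ((1 : ℝ) / 2) ^ (∑ i ∈ univ.erase (0 : Fin S), b i s) := by
  have hSpos : (0:ℝ) < S := by exact_mod_cast (NeZero.pos S)
  set α : Fin S → ℕ := fun s => ∑ i ∈ univ.erase (0 : Fin S), b i s with hα
  have hsumN : ∑ s, α s = 2 * (S - 1) := by
    simp only [hα]
    rw [Finset.sum_comm]
    rw [Finset.sum_congr rfl (fun i hi => hβ i (Finset.ne_of_mem_erase hi))]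
    rw [Finset.sum_const, Finset.card_erase_of_mem (Finset.mem_univ _)]
    simp [mul_comm, Fintype.card_fin]
  have hsumR : ∑ s, (α s : ℝ) = 2 * (S : ℝ) - 2 := by
    rw [← Nat.cast_sum, hsumN]
    push_cast [Nat.cast_sub (le_trans (by norm_num : 1 ≤ 2) hS)]
    ring
  have hstep : ∑ s, ((3:ℝ) - α s) / 4 ≤ ∑ s, ((1:ℝ)/2) ^ (α s) :=
    Finset.sum_le_sum fun s _ => pow_half_ge_aux (α s)
  have hlhs : ∑ s, ((3:ℝ) - α s) / 4 = ((S:ℝ) + 2) / 4 := by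
    rw [← Finset.sum_div, Finset.sum_sub_distrib, hsumR, Finset.sum_const,
      Finset.card_univ, Fintype.card_fin, nsmul_eq_mul]
    ring
  have : ((S:ℝ) + 2) / 4 ≤ ∑ s, ((1:ℝ)/2) ^ (α s) := hlhs ▸ hstep
  calc ((S : ℝ) + 2) / (4 * S) = (1 / S) * (((S:ℝ) + 2) / 4) := by
        rw [one_div, inv_mul_eq_div, div_div, mul_comm (4:ℝ)]
    _ ≤ (1 / S) * ∑ s, ((1:ℝ)/2) ^ (α s) := by
        apply mul_le_mul_of_nonneg_left this (by positivity)
    _ = ∑ s, (1 / (S : ℝ)) * ((1 : ℝ) / 2) ^ (α s) := by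
        rw [Finset.mul_sum]
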